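/- For 0 < b < 2π with b ≠ π (so 1 - cos b ≠ 0), the functions p_{2,2}(x) = 1 - cos x, p_{2,1}(x) = sin x - (sin b/(1-cos b))(1-cos x), and p_{2,0}(x) = 1 - cos(x-b) form a Bernstein basis for span{1, cos x, sin x} on {0, b}: p_{2,k} has a zero of order exactly k at 0 and exactly 2-k at b. Moreover p_{2,1}'(b) = -1 < 0 and p_{2,1}'(0) = 1 > 0, so this basis is locally non-negative at {0,b}. -/

import Mathlib

open Set Real

/-- `f` has a zero of order exactly `k` at `a`. -/
def ZeroOfOrder (f : ℝ → ℝ) (a : ℝ) (k : ℕ) : Prop :=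
  (∀ i < k, iteratedDeriv i f a = 0) ∧ iteratedDeriv k f a ≠ 0

private lemma deriv_one_sub_cos : deriv (fun x => 1 - Real.cos x) = Real.sin := by
  funext x
  have h : HasDerivAt (fun x => 1 - Real.cos x) (Real.sin x) x := by
    exact ((hasDerivAt_const x (1:ℝ)).sub (Real.hasDerivAt_cos x)).congr_deriv (by ring)
  exact h.deriv

private lemma deriv_one_sub_cos_sub (b : ℝ) :
    deriv (fun x => 1 - Real.cos (x - b)) = fun x => Real.sin (x - b) := by
  funext x
  have h1 : HasDerivAt (fun x : ℝ => x - b) 1 x := (hasDerivAt_id x).sub_const b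
  have h2 := (Real.hasDerivAt_cos (x - b)).comp x h1
  have h : HasDerivAt (fun x => 1 - Real.cos (x - b)) (Real.sin (x - b)) x := by
    exact ((hasDerivAt_const x (1:ℝ)).sub h2).congr_deriv (by ring)
  exact h.deriv

private lemma deriv_sin_sub (b : ℝ) :
    deriv (fun x => Real.sin (x - b)) = fun x => Real.cos (x - b) := by
  funext x
  have h1 : HasDerivAt (fun x : ℝ => x - b) 1 x := (hasDerivAt_id x).sub_const b
  have h2 := (Real.hasDerivAt_sin (x - b)).comp x h1
  simpa using h2.deriv

private lemma deriv_p21_fun (b c : ℝ) :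
    deriv (fun x => Real.sin x - c * (1 - Real.cos x))
      = fun x => Real.cos x - c * Real.sin x := by
  funext x
  have h2 : HasDerivAt (fun x => 1 - Real.cos x) (Real.sin x) x := by
    exact ((hasDerivAt_const x (1:ℝ)).sub (Real.hasDerivAt_cos x)).congr_deriv (by ring)
  have h : HasDerivAt (fun x => Real.sin x - c * (1 - Real.cos x))
      (Real.cos x - c * Real.sin x) x := (Real.hasDerivAt_sin x).sub (h2.const_mul c)
  exact h.deriv

private lemma key_ineq (b x : ℝ) (hb0 : 0 < b) (hb2 : b < 2 * π)
    (hx0 : 0 ≤ x) (hxb : x ≤ b) :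
    Real.sin b ≤ Real.sin x + Real.sin (b - x) := by
  have hb2' : b / 2 ≤ π := by linarith
  have hs : 0 ≤ Real.sin (b / 2) :=
    Real.sin_nonneg_of_nonneg_of_le_pi (by linarith) hb2'
  have h1 : Real.sin x + Real.sin (b - x)
      = 2 * Real.sin (b / 2) * Real.cos (x - b / 2) := by
    have ex : b / 2 + (x - b / 2) = x := by ring
    have ey : b / 2 - (x - b / 2) = b - x := by ring
    calc Real.sin x + Real.sin (b - x)
        = Real.sin (b / 2 + (x - b / 2)) + Real.sin (b / 2 - (x - b / 2)) := by
          rw [ex, ey]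
      _ = 2 * Real.sin (b / 2) * Real.cos (x - b / 2) := by
          rw [Real.sin_add (b/2) (x - b/2), Real.sin_sub (b/2) (x - b/2)]; ring
  have h2 : Real.sin b = 2 * Real.sin (b / 2) * Real.cos (b / 2) := by
    calc Real.sin b = Real.sin (2 * (b / 2)) := by congr 1; ring
      _ = 2 * Real.sin (b / 2) * Real.cos (b / 2) := Real.sin_two_mul (b / 2)
  have h3 : Real.cos (b / 2) ≤ Real.cos (x - b / 2) := by
    rw [← Real.cos_abs (x - b / 2)]
    apply Real.cos_le_cos_of_nonneg_of_le_pi (abs_nonneg _) hb2'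
    rw [abs_le]
    constructor <;> linarith
  rw [h1, h2]
  nlinarith

private lemma p21_eq_div (b : ℝ) (hcb : 1 - Real.cos b ≠ 0) (x : ℝ) :
    Real.sin x - (Real.sin b / (1 - Real.cos b)) * (1 - Real.cos x)
      = (Real.sin x + Real.sin (b - x) - Real.sin b) / (1 - Real.cos b) := by
  rw [Real.sin_sub]
  field_simp
  ring

/-- For `0 < b < 2π`, `b ≠ π`, the functions `p_{2,2} = 1 - cos x`,
`p_{2,1} = sin x - (sin b/(1-cos b))(1-cos x)`, `p_{2,0} = 1 - cos(x-b)` form a Bernstein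
basis of `span{1, cos, sin}` for `{0,b}`: `p_{2,k}` has a zero of order exactly `k` at `0`
and exactly `2-k` at `b`; moreover `p_{2,1}'(b) = -1 < 0` and `p_{2,1}'(0) = 1 > 0`, and the
basis is locally non-negative at `{0,b}`. -/
theorem trig_bernstein_basis
    (b : ℝ) (hb0 : 0 < b) (hb2 : b < 2 * π) (hbπ : b ≠ π) :
    let p22 : ℝ → ℝ := fun x => 1 - Real.cos x
    let p21 : ℝ → ℝ := fun x => Real.sin x - (Real.sin b / (1 - Real.cos b)) * (1 - Real.cos x)
    let p20 : ℝ → ℝ := fun x => 1 - Real.cos (x - b)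
    (p22 ∈ Submodule.span ℝ ({fun _ => (1 : ℝ), Real.cos, Real.sin} : Set (ℝ → ℝ))) ∧
    (p21 ∈ Submodule.span ℝ ({fun _ => (1 : ℝ), Real.cos, Real.sin} : Set (ℝ → ℝ))) ∧
    (p20 ∈ Submodule.span ℝ ({fun _ => (1 : ℝ), Real.cos, Real.sin} : Set (ℝ → ℝ))) ∧
    ZeroOfOrder p22 0 2 ∧ ZeroOfOrder p22 b 0 ∧
    ZeroOfOrder p21 0 1 ∧ ZeroOfOrder p21 b 1 ∧
    ZeroOfOrder p20 0 0 ∧ ZeroOfOrder p20 b 2 ∧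
    deriv p21 b = -1 ∧ deriv p21 0 = 1 ∧
    ∃ δ > 0, ∀ x ∈ Ico 0 δ ∪ Ioc (b - δ) b,
      0 ≤ p22 x ∧ 0 ≤ p21 x ∧ 0 ≤ p20 x := by
  intro p22 p21 p20
  have hπ := Real.pi_pos
  -- cos b < 1
  have hcb : Real.cos b < 1 := by
    rcases lt_or_eq_of_le (Real.cos_le_one b) with h | h
    · exact h
    · exfalso
      have := (Real.cos_eq_one_iff_of_lt_of_lt (by linarith) hb2).mp h
      linarith
  have hd : (0 : ℝ) < 1 - Real.cos b := by linarith
  have hd' : (1 : ℝ) - Real.cos b ≠ 0 := ne_of_gt hd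
  set c : ℝ := Real.sin b / (1 - Real.cos b) with hc
  have hc1 : Real.sin b - c * (1 - Real.cos b) = 0 := by
    rw [hc]; field_simp; simp
  have hc2 : Real.cos b - c * Real.sin b = -1 := by
    rw [hc]; field_simp
    nlinarith [Real.sin_sq_add_cos_sq b]
  -- derivative identities
  have e22 : deriv p22 = Real.sin := deriv_one_sub_cos
  have e21 : deriv p21 = fun x => Real.cos x - c * Real.sin x := deriv_p21_fun b c
  have e20 : deriv p20 = fun x => Real.sin (x - b) := deriv_one_sub_cos_sub b
  have e20' : deriv (fun x => Real.sin (x - b)) = fun x => Real.cos (x - b) :=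
    deriv_sin_sub b
  -- span generators
  have h1 : (fun _ => (1 : ℝ)) ∈
      Submodule.span ℝ ({fun _ => (1 : ℝ), Real.cos, Real.sin} : Set (ℝ → ℝ)) :=
    Submodule.subset_span (by simp)
  have hcos : Real.cos ∈
      Submodule.span ℝ ({fun _ => (1 : ℝ), Real.cos, Real.sin} : Set (ℝ → ℝ)) :=
    Submodule.subset_span (by simp)
  have hsin : Real.sin ∈
      Submodule.span ℝ ({fun _ => (1 : ℝ), Real.cos, Real.sin} : Set (ℝ → ℝ)) :=
    Submodule.subset_span (by simp)
  refine ⟨?_, ?_, ?_, ?_, ?_, ?_, ?_, ?_, ?_, ?_, ?_, ?_⟩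
  · exact Submodule.sub_mem _ h1 hcos
  · exact Submodule.sub_mem _ hsin
      (Submodule.smul_mem _ c (Submodule.sub_mem _ h1 hcos))
  · have hrw : p20 = (fun _ => (1 : ℝ)) - Real.cos b • Real.cos - Real.sin b • Real.sin := by
      funext x
      show 1 - Real.cos (x - b) = 1 - Real.cos b * Real.cos x - Real.sin b * Real.sin x
      rw [Real.cos_sub]; ring
    rw [hrw]
    exact Submodule.sub_mem _ (Submodule.sub_mem _ h1 (Submodule.smul_mem _ _ hcos))
      (Submodule.smul_mem _ _ hsin)
  · -- ZeroOfOrder p22 0 2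
    refine ⟨?_, ?_⟩
    · intro i hi
      interval_cases i
      · show p22 0 = 0
        show 1 - Real.cos 0 = 0
        simp
      · rw [iteratedDeriv_one, e22]
        simp
    · rw [iteratedDeriv_succ, iteratedDeriv_one, e22, Real.deriv_sin]
      simp
  · -- ZeroOfOrder p22 b 0
    refine ⟨fun i hi => absurd hi (Nat.not_lt_zero i), ?_⟩
    rw [iteratedDeriv_zero]
    show 1 - Real.cos b ≠ 0
    exact hd'
  · -- ZeroOfOrder p21 0 1
    refine ⟨?_, ?_⟩
    · intro i hi
      interval_cases i
      show Real.sin 0 - c * (1 - Real.cos 0) = 0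
      simp
    · rw [iteratedDeriv_one, e21]
      simp
  · -- ZeroOfOrder p21 b 1
    refine ⟨?_, ?_⟩
    · intro i hi
      interval_cases i
      exact hc1
    · rw [iteratedDeriv_one, e21]
      show Real.cos b - c * Real.sin b ≠ 0
      rw [hc2]; norm_num
  · -- ZeroOfOrder p20 0 0
    refine ⟨fun i hi => absurd hi (Nat.not_lt_zero i), ?_⟩
    rw [iteratedDeriv_zero]
    show 1 - Real.cos (0 - b) ≠ 0
    rw [zero_sub, Real.cos_neg]
    exact hd'
  · -- ZeroOfOrder p20 b 2
    refine ⟨?_, ?_⟩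
    · intro i hi
      interval_cases i
      · show 1 - Real.cos (b - b) = 0
        simp
      · rw [iteratedDeriv_one, e20]
        simp
    · rw [iteratedDeriv_succ, iteratedDeriv_one, e20, e20']
      simp
  · rw [e21]; exact hc2
  · rw [e21]; simp
  · refine ⟨b, hb0, ?_⟩
    intro x hx
    have hx' : 0 ≤ x ∧ x ≤ b := by
      rcases hx with h | h
      · exact ⟨h.1, h.2.le⟩
      · refine ⟨?_, h.2⟩
        have := h.1
        linarith [h.1]
    obtain ⟨hx0, hxb⟩ := hx'
    refine ⟨?_, ?_, ?_⟩
    · show 0 ≤ 1 - Real.cos x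
      linarith [Real.cos_le_one x]
    · show 0 ≤ Real.sin x - Real.sin b / (1 - Real.cos b) * (1 - Real.cos x)
      rw [p21_eq_div b hd' x]
      apply div_nonneg _ hd.le
      have := key_ineq b x hb0 hb2 hx0 hxb
      linarith
    · show 0 ≤ 1 - Real.cos (x - b)
      linarith [Real.cos_le_one (x - b)]
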